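/- arXiv:2001.03719 — 3 statements merged into one kernel-verified Lean document; each statement's English description precedes it below -/
import Mathlib

section
/- If W is a Bernoulli random variable with P(W=1|X=x)=e(x), the potential outcomes (Y¹,Y⁰) are conditionally independent of W given X, and 0<e(x)<1 for all x, then E[W·Y/e(X)] = E[Y¹], where Y = W·Y¹+(1−W)·Y⁰. -/
open MeasureTheory ProbabilityTheory

/-- The σ-algebra generated by a function. -/
def mSigma {Ω α : Type*} [MeasurableSpace α] (f : Ω → α) : MeasurableSpace Ω :=
  MeasurableSpace.comap f inferInstance

/-- IPW identification of E[Y¹]: under unconfoundedness and overlap,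
`E[W·Y/e(X)] = E[Y¹]` where `Y = W·Y1 + (1-W)·Y⁰`. -/
theorem ipw_aux
    {Ω : Type*} [mΩ : MeasurableSpace Ω] [StandardBorelSpace Ω]
    (μ : Measure Ω) [IsProbabilityMeasure μ]
    (X : Ω → ℝ) (W : Ω → ℝ) (Y1 Y0 Y : Ω → ℝ)
    (hX : Measurable X) (hW : Measurable W) (hY1 : Measurable Y1) (hY0 : Measurable Y0)
    (hWbin : ∀ ω, W ω = 0 ∨ W ω = 1)
    (hY : ∀ ω, Y ω = W ω * Y1 ω + (1 - W ω) * Y0 ω)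
    (e : ℝ → ℝ) (he : Measurable e)
    (hoverlap : ∀ x, 0 < e x ∧ e x < 1)
    (hprop : μ[W | MeasurableSpace.comap X inferInstance] =ᵐ[μ] fun ω => e (X ω))
    (hunconf : CondIndepFun (MeasurableSpace.comap X inferInstance) (hX.comap_le) W
      (fun ω => (Y1 ω, Y0 ω)) μ)
    (hY1int : Integrable Y1 μ)
    (hint : Integrable (fun ω => W ω * Y ω / e (X ω)) μ) :
    ∫ ω, W ω * Y ω / e (X ω) ∂μ = ∫ ω, Y1 ω ∂μ := by
  classical
  have hprop : μ[W | mSigma X] =ᵐ[μ] fun ω => e (X ω) := hprop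
  have hunconf : CondIndepFun (mSigma X) hX.comap_le W (fun ω => (Y1 ω, Y0 ω)) μ := hunconf
  have hm' : mSigma X ≤ mΩ := hX.comap_le
  set P : Ω → ℝ × ℝ := fun ω => (Y1 ω, Y0 ω) with hPdef
  have hP : Measurable[mΩ] P := hY1.prodMk hY0
  set T : Ω → ℝ × (ℝ × ℝ) := fun ω => (X ω, P ω) with hTdef
  have hT : Measurable[mΩ] T := hX.prodMk hP
  have hm'' : mSigma T ≤ mΩ := hT.comap_le
  haveI : SigmaFinite (μ.trim hm'') := inferInstance
  haveI : SigmaFinite (μ.trim hm') := inferInstance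
  -- measurability w.r.t. (mSigma X) and (mSigma T)
  have hXm1 : Measurable[(mSigma X)] X := measurable_iff_comap_le.mpr le_rfl
  have hTm : Measurable[(mSigma T)] T := measurable_iff_comap_le.mpr le_rfl
  have hXm2 : Measurable[(mSigma T)] X := measurable_fst.comp hTm
  have hY1m2 : Measurable[(mSigma T)] Y1 := measurable_fst.comp (measurable_snd.comp hTm)
  have heXm1 : Measurable[(mSigma X)] fun ω => e (X ω) := he.comp hXm1
  have heXm2 : Measurable[(mSigma T)] fun ω => e (X ω) := he.comp hXm2
  -- basic bounds/integrability
  have hWabs : ∀ ω, ‖W ω‖ ≤ 1 := by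
    intro ω; rcases hWbin ω with h | h <;> simp [h]
  have hWint : Integrable W μ :=
    (integrable_const (1 : ℝ)).mono' hW.aestronglyMeasurable (Filter.Eventually.of_forall hWabs)
  have heXabs : ∀ ω, ‖e (X ω)‖ ≤ 1 := by
    intro ω
    rw [Real.norm_eq_abs, abs_of_pos (hoverlap (X ω)).1]
    exact le_of_lt (hoverlap (X ω)).2
  have heXint : Integrable (fun ω => e (X ω)) μ :=
    (integrable_const (1 : ℝ)).mono' (he.comp hX).aestronglyMeasurable
      (Filter.Eventually.of_forall heXabs)
  -- W as an indicator
  set A : Set Ω := W ⁻¹' {1} with hAdef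
  have hA : MeasurableSet A := hW (measurableSet_singleton 1)
  have hWind : W = A.indicator fun _ => (1 : ℝ) := by
    funext ω
    rcases hWbin ω with h | h
    · have : ω ∉ A := by simp [hAdef, h]
      simp [Set.indicator_apply, this, h]
    · have : ω ∈ A := by simp [hAdef, h]
      simp [Set.indicator_apply, this, h]
  -- the conditional independence in "sets" form
  have hCI := (condIndepFun_iff_condExp_inter_preimage_eq_mul
      (hm' := hX.comap_le) (μ := μ) hW hP).mp hunconf
  -- Step A: set-integral identity on "boxes"
  have hbox : ∀ s : Set ℝ, MeasurableSet s → ∀ t : Set (ℝ × ℝ), MeasurableSet t →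
      ∫ ω in X ⁻¹' s ∩ P ⁻¹' t, e (X ω) ∂μ = ∫ ω in X ⁻¹' s ∩ P ⁻¹' t, W ω ∂μ := by
    intro s hs t ht
    have ha' : MeasurableSet[(mSigma X)] (X ⁻¹' s) := ⟨s, hs, rfl⟩
    have ha : MeasurableSet (X ⁻¹' s) := hm' _ ha'
    have hb : MeasurableSet (P ⁻¹' t) := hP ht
    have hbint : Integrable ((P ⁻¹' t).indicator fun _ => (1 : ℝ)) μ :=
      (integrable_const 1).indicator hb
    -- LHS
    have hfg_int : Integrable ((fun ω => e (X ω)) * (P ⁻¹' t).indicator fun _ => (1 : ℝ)) μ := by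
      refine (integrable_const (1 : ℝ)).mono'
        ((he.comp hX).aestronglyMeasurable.mul hbint.aestronglyMeasurable)
        (Filter.Eventually.of_forall fun ω => ?_)
      by_cases hω : ω ∈ P ⁻¹' t
      · simpa [Pi.mul_apply, hω] using heXabs ω
      · simp [Pi.mul_apply, hω]
    have hpull : μ[(fun ω => e (X ω)) * (P ⁻¹' t).indicator fun _ => (1 : ℝ)|(mSigma X)]
        =ᵐ[μ] (fun ω => e (X ω)) * μ[(P ⁻¹' t).indicator fun _ => (1 : ℝ)|(mSigma X)] :=
      condExp_mul_of_stronglyMeasurable_left heXm1.stronglyMeasurable hfg_int hbint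
    have hLHS : ∫ ω in X ⁻¹' s ∩ P ⁻¹' t, e (X ω) ∂μ
        = ∫ ω in X ⁻¹' s, ((fun ω => e (X ω)) * μ[(P ⁻¹' t).indicator fun _ => (1 : ℝ)|(mSigma X)]) ω ∂μ := by
      rw [← setIntegral_indicator hb]
      have h1 : ∫ ω in X ⁻¹' s, (P ⁻¹' t).indicator (fun ω => e (X ω)) ω ∂μ
          = ∫ ω in X ⁻¹' s, ((fun ω => e (X ω)) * (P ⁻¹' t).indicator fun _ => (1 : ℝ)) ω ∂μ := by
        refine setIntegral_congr_fun ha fun ω _ => ?_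
        by_cases hω : ω ∈ P ⁻¹' t <;> simp [Set.indicator_apply, hω]
      rw [h1, ← setIntegral_condExp hm' hfg_int ha']
      exact integral_congr_ae (ae_restrict_of_ae hpull)
    -- RHS
    have hABind : Integrable ((A ∩ P ⁻¹' t).indicator fun _ => (1 : ℝ)) μ :=
      (integrable_const 1).indicator (hA.inter hb)
    have hRHS : ∫ ω in X ⁻¹' s ∩ P ⁻¹' t, W ω ∂μ
        = ∫ ω in X ⁻¹' s, (fun ω => (μ⟦A|(mSigma X)⟧) ω * (μ⟦P ⁻¹' t|(mSigma X)⟧) ω) ω ∂μ := by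
      rw [← setIntegral_indicator hb]
      have h1 : ∫ ω in X ⁻¹' s, (P ⁻¹' t).indicator W ω ∂μ
          = ∫ ω in X ⁻¹' s, (A ∩ P ⁻¹' t).indicator (fun _ => (1 : ℝ)) ω ∂μ := by
        refine setIntegral_congr_fun ha fun ω _ => ?_
        by_cases hω : ω ∈ P ⁻¹' t
        · rcases hWbin ω with h | h
          · have : ω ∉ A := by simp [hAdef, h]
            simp [Set.indicator_apply, hω, this, h]
          · have : ω ∈ A := by simp [hAdef, h]
            simp [Set.indicator_apply, hω, this, h]
        · have : ω ∉ A ∩ P ⁻¹' t := fun hc => hω hc.2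
          simp [Set.indicator_apply, hω, this]
      rw [h1, ← setIntegral_condExp hm' hABind ha']
      refine integral_congr_ae (ae_restrict_of_ae ?_)
      exact hCI {1} t (measurableSet_singleton 1) ht
    rw [hLHS, hRHS]
    -- replace μ⟦A|(mSigma X)⟧ by e ∘ X
    have hWA : μ⟦A|(mSigma X)⟧ =ᵐ[μ] fun ω => e (X ω) := by
      have : μ[W|(mSigma X)] = μ⟦A|(mSigma X)⟧ := by rw [hWind]
      rw [← this]; exact hprop
    refine integral_congr_ae (ae_restrict_of_ae ?_)
    filter_upwards [hWA] with ω hω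
    simp [Pi.mul_apply, hω]
  -- Step B: extend to all (mSigma T)-measurable sets via π-system induction
  have hsetint : ∀ u : Set Ω, MeasurableSet[(mSigma T)] u →
      ∫ ω in u, e (X ω) ∂μ = ∫ ω in u, W ω ∂μ := by
    have hgen : (mSigma T) = MeasurableSpace.generateFrom
        {u : Set Ω | ∃ v ∈ Set.image2 (· ×ˢ ·) {s : Set ℝ | MeasurableSet s}
          {t : Set (ℝ × ℝ) | MeasurableSet t}, T ⁻¹' v = u} := by
      show MeasurableSpace.comap T inferInstance = _
      rw [show (inferInstance : MeasurableSpace (ℝ × (ℝ × ℝ)))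
          = MeasurableSpace.generateFrom (Set.image2 (· ×ˢ ·) {s : Set ℝ | MeasurableSet s}
            {t : Set (ℝ × ℝ) | MeasurableSet t}) from generateFrom_prod.symm,
        MeasurableSpace.comap_generateFrom]
      rfl
    have hpi : IsPiSystem {u : Set Ω | ∃ v ∈ Set.image2 (· ×ˢ ·) {s : Set ℝ | MeasurableSet s}
        {t : Set (ℝ × ℝ) | MeasurableSet t}, T ⁻¹' v = u} :=
      (isPiSystem_prod (α := ℝ) (β := ℝ × ℝ)).comap T
    intro u hu
    refine MeasurableSpace.induction_on_inter (m := (mSigma T))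
      (C := fun u _ => ∫ ω in u, e (X ω) ∂μ = ∫ ω in u, W ω ∂μ) hgen hpi ?_ ?_ ?_ ?_ u hu
    · simp
    · rintro _ ⟨v, hv, rfl⟩
      rw [Set.mem_image2] at hv
      obtain ⟨s, hs, t, ht, rfl⟩ := hv
      have hpre : T ⁻¹' (s ×ˢ t) = X ⁻¹' s ∩ P ⁻¹' t := by
        rw [hTdef]; exact Set.mk_preimage_prod X P
      rw [hpre]
      exact hbox s hs t ht
    · intro v hv hCv
      have hv' : MeasurableSet v := hm'' _ hv
      rw [setIntegral_compl hv' heXint, setIntegral_compl hv' hWint, hCv]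
      have hIW : ∫ ω, W ω ∂μ = ∫ ω, e (X ω) ∂μ := by
        rw [← integral_condExp hm']
        exact integral_congr_ae hprop
      rw [hIW]
    · intro f hdisj hfmeas hCf
      have hfm : ∀ i, MeasurableSet (f i) := fun i => hm'' _ (hfmeas i)
      rw [integral_iUnion hfm hdisj heXint.integrableOn,
        integral_iUnion hfm hdisj hWint.integrableOn]
      exact tsum_congr hCf
  -- Step C: e(X) is a version of E[W | (mSigma T)]
  have hcond : (fun ω => e (X ω)) =ᵐ[μ] μ[W|(mSigma T)] := by
    refine ae_eq_condExp_of_forall_setIntegral_eq hm'' hWint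
      (fun s _ _ => heXint.integrableOn) (fun s hs _ => hsetint s hs) ?_
    exact heXm2.stronglyMeasurable.aestronglyMeasurable
  -- Step D: conclude
  set g : Ω → ℝ := fun ω => Y1 ω / e (X ω) with hgdef
  have hg_sm : StronglyMeasurable[(mSigma T)] g := (hY1m2.div heXm2).stronglyMeasurable
  have hfun : (fun ω => W ω * Y ω / e (X ω)) = g * W := by
    funext ω
    rcases hWbin ω with h | h
    · simp [hgdef, Pi.mul_apply, hY ω, h]
    · simp only [hgdef, Pi.mul_apply, hY ω, h]
      ring
  have hgW_int : Integrable (g * W) μ := by rw [← hfun]; exact hint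
  have hpull : μ[g * W|(mSigma T)] =ᵐ[μ] g * μ[W|(mSigma T)] :=
    condExp_mul_of_stronglyMeasurable_left hg_sm hgW_int hWint
  have hfinal : μ[g * W|(mSigma T)] =ᵐ[μ] Y1 := by
    filter_upwards [hpull, hcond] with ω h1 h2
    rw [h1, Pi.mul_apply, ← h2, hgdef]
    exact div_mul_cancel₀ (Y1 ω) (ne_of_gt (hoverlap (X ω)).1)
  calc ∫ ω, W ω * Y ω / e (X ω) ∂μ = ∫ ω, (g * W) ω ∂μ := by rw [hfun]
    _ = ∫ ω, (μ[g * W|(mSigma T)]) ω ∂μ := (integral_condExp hm'').symm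
    _ = ∫ ω, Y1 ω ∂μ := integral_congr_ae hfinal

/-- IPW identification of E[Y¹]: under unconfoundedness and overlap,
`E[W·Y/e(X)] = E[Y¹]` where `Y = W·Y1 + (1-W)·Y⁰`. -/
theorem ipw_identifies_treated_mean
    {Ω : Type*} [MeasurableSpace Ω] [StandardBorelSpace Ω]
    (μ : Measure Ω) [IsProbabilityMeasure μ]
    (X : Ω → ℝ) (W : Ω → ℝ) (Y1 Y0 Y : Ω → ℝ)
    (hX : Measurable X) (hW : Measurable W) (hY1 : Measurable Y1) (hY0 : Measurable Y0)
    (hWbin : ∀ ω, W ω = 0 ∨ W ω = 1)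
    (hY : ∀ ω, Y ω = W ω * Y1 ω + (1 - W ω) * Y0 ω)
    (e : ℝ → ℝ) (he : Measurable e)
    (hoverlap : ∀ x, 0 < e x ∧ e x < 1)
    (hprop : μ[W | MeasurableSpace.comap X inferInstance] =ᵐ[μ] fun ω => e (X ω))
    (hunconf : CondIndepFun (MeasurableSpace.comap X inferInstance) (hX.comap_le) W
      (fun ω => (Y1 ω, Y0 ω)) μ)
    (hY1int : Integrable Y1 μ)
    (hint : Integrable (fun ω => W ω * Y ω / e (X ω)) μ) :
    ∫ ω, W ω * Y ω / e (X ω) ∂μ = ∫ ω, Y1 ω ∂μ :=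
  ipw_aux μ X W Y1 Y0 Y hX hW hY1 hY0 hWbin hY e he hoverlap hprop hunconf hY1int hint
end

section
/- Balancing property of the propensity score: if e(X)=P(W=1|X), then W ⟂ X | e(X); that is, conditional on the propensity score, the treatment indicator is independent of the covariates, because P(W=1|X, e(X)) = e(X) = P(W=1|e(X)). -/
open MeasureTheory ProbabilityTheory

/-- Balancing property of the propensity score: if `e(X) = P(W=1|X)`, then
conditionally on `e(X)` the treatment `W` is independent of the covariates `X`,
and `P(W=1|e(X)) = e(X)`. -/
theorem propensity_score_balancing
    {Ω : Type*} [MeasurableSpace Ω] [StandardBorelSpace Ω]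
    (μ : Measure Ω) [IsProbabilityMeasure μ]
    (X : Ω → ℝ) (W : Ω → ℝ)
    (hX : Measurable X) (hW : Measurable W)
    (hWbin : ∀ ω, W ω = 0 ∨ W ω = 1)
    (e : ℝ → ℝ) (he : Measurable e)
    (hprop : μ[W | MeasurableSpace.comap X inferInstance] =ᵐ[μ] fun ω => e (X ω)) :
    CondIndepFun (MeasurableSpace.comap (fun ω => e (X ω)) inferInstance)
      ((he.comp hX).comap_le) W X μ ∧
    μ[W | MeasurableSpace.comap (fun ω => e (X ω)) inferInstance]
      =ᵐ[μ] fun ω => e (X ω) := by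
  rename_i m0 sb ip
  classical
  set mW : MeasurableSpace Ω := MeasurableSpace.comap (fun ω => e (X ω)) inferInstance with hmW
  set mX : MeasurableSpace Ω := MeasurableSpace.comap X inferInstance with hmX
  have hmWle : mW ≤ m0 := (he.comp hX).comap_le
  have hmXle : mX ≤ m0 := hX.comap_le
  have hle : mW ≤ mX := by
    rintro s ⟨t, ht, rfl⟩
    exact ⟨e ⁻¹' t, he ht, rfl⟩
  have heXsm : StronglyMeasurable[mW] (fun ω => e (X ω)) :=
    (Measurable.of_comap_le le_rfl).stronglyMeasurable
  have hWint : Integrable W μ := by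
    refine Integrable.mono' (integrable_const 1) hW.aestronglyMeasurable
      (Filter.Eventually.of_forall fun ω => ?_)
    rcases hWbin ω with h | h <;> simp [h]
  have heXint : Integrable (fun ω => e (X ω)) μ := integrable_condExp.congr hprop
  -- Part 2
  have part2 : μ[W|mW] =ᵐ[μ] fun ω => e (X ω) := by
    calc μ[W|mW] =ᵐ[μ] μ[μ[W|mX]|mW] := (condExp_condExp_of_le hle hmXle).symm
      _ =ᵐ[μ] μ[(fun ω => e (X ω))|mW] := condExp_congr_ae hprop
      _ = fun ω => e (X ω) := condExp_of_stronglyMeasurable (μ := μ) hmWle heXsm heXint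
  refine ⟨?_, part2⟩
  -- Part 1
  rw [condIndepFun_iff_condExp_inter_preimage_eq_mul hW hX]
  intro s t hs ht
  set it : Ω → ℝ := (X ⁻¹' t).indicator (fun _ => (1 : ℝ)) with hit
  have hitsm : StronglyMeasurable[mX] it :=
    stronglyMeasurable_const.indicator ⟨t, ht, rfl⟩
  have hitmeas : Measurable[m0] it := measurable_const.indicator (hX ht)
  have hitbd : ∀ ω, ‖it ω‖ ≤ 1 := by
    intro ω; by_cases h : ω ∈ X ⁻¹' t <;> simp [hit, Set.indicator_apply, h]
  have hitint : Integrable it μ :=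
    Integrable.mono' (integrable_const 1) hitmeas.aestronglyMeasurable
      (Filter.Eventually.of_forall hitbd)
  have hWitint : Integrable (fun ω => W ω * it ω) μ := by
    refine Integrable.mono' (integrable_const 1) (hW.mul hitmeas).aestronglyMeasurable
      (Filter.Eventually.of_forall fun ω => ?_)
    rcases hWbin ω with h | h
    · simp [h]
    · simpa [h] using hitbd ω
  have hitEint : Integrable (fun ω => e (X ω) * it ω) μ := by
    refine Integrable.mono' heXint.norm ((he.comp hX).mul hitmeas).aestronglyMeasurable
      (Filter.Eventually.of_forall fun ω => ?_)
    calc ‖e (X ω) * it ω‖ = ‖e (X ω)‖ * ‖it ω‖ := norm_mul _ _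
      _ ≤ ‖e (X ω)‖ * 1 := by gcongr; exact hitbd ω
      _ = ‖e (X ω)‖ := mul_one _
  -- the key computation
  have key : μ[(fun ω => W ω * it ω)|mW] =ᵐ[μ] fun ω => e (X ω) * (μ[it|mW]) ω := by
    have h1 : μ[(fun ω => W ω * it ω)|mW] =ᵐ[μ] μ[μ[(fun ω => W ω * it ω)|mX]|mW] :=
      (condExp_condExp_of_le hle hmXle).symm
    have h2 : μ[(fun ω => W ω * it ω)|mX] =ᵐ[μ] it * μ[W|mX] := by
      have := condExp_mul_of_stronglyMeasurable_left (μ := μ) hitsm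
        (hWitint.congr (Filter.Eventually.of_forall fun ω => mul_comm (W ω) (it ω))) hWint
      rw [show (fun ω => W ω * it ω) = it * W from funext fun ω => mul_comm _ _]
      exact this
    have h3 : μ[(fun ω => W ω * it ω)|mX] =ᵐ[μ] fun ω => e (X ω) * it ω := by
      refine h2.trans ?_
      filter_upwards [hprop] with ω hω
      simp only [Pi.mul_apply, hω, mul_comm]
    have h4 : μ[μ[(fun ω => W ω * it ω)|mX]|mW] =ᵐ[μ] μ[(fun ω => e (X ω) * it ω)|mW] :=
      condExp_congr_ae h3
    have h5 : μ[(fun ω => e (X ω) * it ω)|mW] =ᵐ[μ] fun ω => e (X ω) * (μ[it|mW]) ω := by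
      have := condExp_mul_of_stronglyMeasurable_left (μ := μ) heXsm
        (by exact hitEint) hitint
      exact this
    exact (h1.trans h4).trans h5
  -- constants coming from the binary decomposition of the indicator of `W ⁻¹' s`
  set c0 : ℝ := s.indicator (fun _ => (1 : ℝ)) 0 with hc0
  set c1 : ℝ := s.indicator (fun _ => (1 : ℝ)) 1 with hc1
  have hWsdec : (W ⁻¹' s).indicator (fun _ => (1 : ℝ))
      = fun ω => c0 + (c1 - c0) * W ω := by
    funext ω
    rcases hWbin ω with h | h <;>
    · simp only [hc0, hc1, Set.indicator_apply, Set.mem_preimage, h]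
      split_ifs <;> ring
  have hinterdec : (W ⁻¹' s ∩ X ⁻¹' t).indicator (fun _ => (1 : ℝ))
      = fun ω => c0 * it ω + (c1 - c0) * (W ω * it ω) := by
    funext ω
    have : (W ⁻¹' s ∩ X ⁻¹' t).indicator (fun _ => (1 : ℝ)) ω
        = (W ⁻¹' s).indicator (fun _ => (1 : ℝ)) ω * it ω := by
      by_cases h1 : ω ∈ W ⁻¹' s <;> by_cases h2 : ω ∈ X ⁻¹' t <;>
        simp [hit, Set.indicator_apply, Set.mem_inter_iff, h1, h2]
    rw [this, hWsdec]
    ring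
  -- conditional expectation of the left-hand side
  have hLHS : (μ⟦W ⁻¹' s ∩ X ⁻¹' t | mW⟧)
      =ᵐ[μ] fun ω => c0 * (μ[it|mW]) ω + (c1 - c0) * (e (X ω) * (μ[it|mW]) ω) := by
    rw [hinterdec]
    have hsum : μ[(fun ω => c0 * it ω + (c1 - c0) * (W ω * it ω))|mW]
        =ᵐ[μ] μ[(fun ω => c0 * it ω)|mW] + μ[(fun ω => (c1 - c0) * (W ω * it ω))|mW] :=
      condExp_add (hitint.const_mul c0) (hWitint.const_mul (c1 - c0)) mW
    have hA : μ[(fun ω => c0 * it ω)|mW] =ᵐ[μ] fun ω => c0 * (μ[it|mW]) ω := by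
      have := condExp_smul (μ := μ) (m := mW) c0 it
      exact this
    have hB : μ[(fun ω => (c1 - c0) * (W ω * it ω))|mW]
        =ᵐ[μ] fun ω => (c1 - c0) * (e (X ω) * (μ[it|mW]) ω) := by
      have h := condExp_smul (μ := μ) (m := mW) (c1 - c0) (fun ω => W ω * it ω)
      refine (by exact h : _ =ᵐ[μ]
        fun ω => (c1 - c0) * (μ[(fun ω => W ω * it ω)|mW]) ω).trans ?_
      filter_upwards [key] with ω hω
      rw [hω]
    filter_upwards [hsum, hA, hB] with ω h1 h2 h3
    simp only [Pi.add_apply] at h1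
    rw [h1, h2, h3]
  -- conditional expectation of the indicator of `W ⁻¹' s`
  have hWs : (μ⟦W ⁻¹' s | mW⟧) =ᵐ[μ] fun ω => c0 + (c1 - c0) * e (X ω) := by
    rw [hWsdec]
    have hsum : μ[(fun ω => c0 + (c1 - c0) * W ω)|mW]
        =ᵐ[μ] μ[(fun _ => c0)|mW] + μ[(fun ω => (c1 - c0) * W ω)|mW] :=
      condExp_add (integrable_const c0) (hWint.const_mul (c1 - c0)) mW
    have hA : μ[(fun _ : Ω => c0)|mW] = fun _ => c0 := condExp_const hmWle c0
    have hB : μ[(fun ω => (c1 - c0) * W ω)|mW] =ᵐ[μ] fun ω => (c1 - c0) * e (X ω) := by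
      have h := condExp_smul (μ := μ) (m := mW) (c1 - c0) W
      refine (by exact h : _ =ᵐ[μ]
        fun ω => (c1 - c0) * (μ[W|mW]) ω).trans ?_
      filter_upwards [part2] with ω hω
      rw [hω]
    filter_upwards [hsum, hB] with ω h1 h3
    simp only [Pi.add_apply, hA] at h1
    rw [h1, h3]
  -- combine
  filter_upwards [hLHS, hWs] with ω h1 h2
  rw [h1, h2]
  ring
end

section
/- Double robustness of conditional-expectation identification: if either (a) the working propensity model ẽ(x) equals the true propensity e(x) almost surely, or (b) the working outcome model m̃₁(x) equals E[Y¹|X=x] almost surely, then E[ W·Y/ẽ(X) − ((W−ẽ(X))/ẽ(X))·m̃₁(X) ] = E[Y¹], under unconfoundedness and overlap. -/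
open MeasureTheory ProbabilityTheory Filter Topology

/-- Monotone-limit integrability criterion. -/
lemma integrable_of_monotone_approx {Ω : Type*} {mΩ : MeasurableSpace Ω}
    {μ : Measure Ω} {f : Ω → ℝ} (hf : Measurable f) (h0 : ∀ ω, 0 ≤ f ω)
    {g : ℕ → Ω → ℝ} (hgm : ∀ k, Measurable (g k)) (hg0 : ∀ k ω, 0 ≤ g k ω)
    (hgint : ∀ k, Integrable (g k) μ)
    (hmono : ∀ ω, Monotone fun k => g k ω)
    (htend : ∀ ω, Tendsto (fun k => g k ω) atTop (𝓝 (f ω)))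
    {C : ℝ} (hC : ∀ k, ∫ ω, g k ω ∂μ ≤ C) : Integrable f μ := by
  refine ⟨hf.aestronglyMeasurable, ?_⟩
  rw [hasFiniteIntegral_iff_ofReal (Eventually.of_forall h0)]
  have hkey : ∫⁻ ω, ENNReal.ofReal (f ω) ∂μ
      = ⨆ k, ∫⁻ ω, ENNReal.ofReal (g k ω) ∂μ := by
    rw [← lintegral_iSup (fun k => (hgm k).ennreal_ofReal)
      (fun i j hij ω => ENNReal.ofReal_le_ofReal (hmono ω hij))]
    refine lintegral_congr fun ω => ?_
    exact tendsto_nhds_unique ((ENNReal.continuous_ofReal.tendsto _).comp (htend ω))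
      (tendsto_atTop_iSup fun i j hij => ENNReal.ofReal_le_ofReal (hmono ω hij))
  rw [hkey]
  refine lt_of_le_of_lt (iSup_le fun k => ?_) (ENNReal.ofReal_lt_top (r := C))
  rw [← ofReal_integral_eq_lintegral_ofReal (hgint k) (Eventually.of_forall (hg0 k))]
  exact ENNReal.ofReal_le_ofReal (hC k)

lemma condExp_mul_of_condIndepFun {Ω : Type*} [mΩ : MeasurableSpace Ω] [StandardBorelSpace Ω]
    {μ : Measure Ω} [IsProbabilityMeasure μ] {m' : MeasurableSpace Ω} (hm' : m' ≤ mΩ)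
    {W Z : Ω → ℝ} (hWm : Measurable[mΩ] W) (hZm : Measurable[mΩ] Z)
    (hWbin : ∀ ω, W ω = 0 ∨ W ω = 1)
    (hindep : CondIndepFun m' hm' W Z μ) (hZint : Integrable Z μ) :
    μ[fun ω => W ω * Z ω|m'] =ᵐ[μ] fun ω => (μ[W|m']) ω * (μ[Z|m']) ω := by
  letI instΩ : MeasurableSpace Ω := mΩ
  have hW01 : ∀ ω, 0 ≤ W ω ∧ W ω ≤ 1 := fun ω => by rcases hWbin ω with h | h <;> simp [h]
  have hWnorm : ∀ ω, ‖W ω‖ ≤ 1 := fun ω => by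
    rw [Real.norm_eq_abs, abs_le]; exact ⟨by linarith [(hW01 ω).1], (hW01 ω).2⟩
  have hWint : Integrable W μ :=
    (integrable_const (1 : ℝ)).mono' hWm.aestronglyMeasurable (Eventually.of_forall hWnorm)
  have hWZint : Integrable (fun ω => W ω * Z ω) μ :=
    hZint.bdd_mul hWm.aestronglyMeasurable (Eventually.of_forall hWnorm)
  have hEWb : ∀ᵐ ω ∂μ, ‖(μ[W|m']) ω‖ ≤ 1 := by
    have h1 := condExp_mono (m := m') hWint (integrable_const (1 : ℝ))
      (Eventually.of_forall fun ω => (hW01 ω).2)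
    have h0 := condExp_nonneg (m := m') (μ := μ)
      (Eventually.of_forall fun ω => (hW01 ω).1)
    rw [condExp_const hm'] at h1
    filter_upwards [h0, h1] with ω a b
    rw [Real.norm_eq_abs, abs_le]
    simp only [Pi.zero_apply] at a
    exact ⟨by linarith, b⟩
  -- product rule for sets
  have hprod := (condIndepFun_iff_condExp_inter_preimage_eq_mul hWm hZm).mp hindep
  set A := W ⁻¹' {1} with hA
  have hWind : W = A.indicator fun _ => (1 : ℝ) := by
    funext ω; rcases hWbin ω with h | h <;>
      simp [Set.indicator_apply, hA, Set.mem_preimage, h]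
  -- simple function stage
  have hsimp : ∀ g : SimpleFunc ℝ ℝ,
      μ[fun ω => W ω * g (Z ω)|m'] =ᵐ[μ]
        fun ω => (μ[W|m']) ω * (μ[fun ω => g (Z ω)|m']) ω := by
    intro g
    refine SimpleFunc.induction ?_ ?_ g
    · intro c s hs
      classical
      have hcoe : ∀ x : ℝ, (SimpleFunc.piecewise s hs (SimpleFunc.const ℝ c)
          (SimpleFunc.const ℝ 0)) x = s.indicator (fun _ => c) x := by
        intro x
        simp only [SimpleFunc.coe_piecewise, SimpleFunc.coe_const,
          Set.piecewise_eq_indicator]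
        rfl
      have h1 : (fun ω => W ω * (SimpleFunc.piecewise s hs (SimpleFunc.const ℝ c)
            (SimpleFunc.const ℝ 0)) (Z ω))
          = fun ω => c • (A ∩ Z ⁻¹' s).indicator (fun _ => (1 : ℝ)) ω := by
        funext ω
        rw [hcoe]
        rcases hWbin ω with h | h <;> by_cases hz : Z ω ∈ s <;>
          simp [Set.indicator_apply, h, hz, hA, Set.mem_preimage]
      have h2 : (fun ω => (SimpleFunc.piecewise s hs (SimpleFunc.const ℝ c)
            (SimpleFunc.const ℝ 0)) (Z ω))
          = fun ω => c • (Z ⁻¹' s).indicator (fun _ => (1 : ℝ)) ω := by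
        funext ω
        rw [hcoe]
        by_cases hz : Z ω ∈ s <;> simp [Set.indicator_apply, hz]
      rw [h1, h2]
      have e1 : μ[fun ω => c • (A ∩ Z ⁻¹' s).indicator (fun _ => (1 : ℝ)) ω|m']
          =ᵐ[μ] fun ω => c • (μ⟦A ∩ Z ⁻¹' s|m'⟧) ω := condExp_smul c _ _
      have e2 : μ[fun ω => c • (Z ⁻¹' s).indicator (fun _ => (1 : ℝ)) ω|m']
          =ᵐ[μ] fun ω => c • (μ⟦Z ⁻¹' s|m'⟧) ω := condExp_smul c _ _
      have e3 := hprod {1} s (measurableSet_singleton 1) hs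
      have e4 : μ[W|m'] =ᵐ[μ] μ⟦A|m'⟧ := by rw [hWind]
      filter_upwards [e1, e2, e3, e4] with ω he1 he2 he3 he4
      rw [he1, he2, he4]
      have : A ∩ Z ⁻¹' s = W ⁻¹' {1} ∩ Z ⁻¹' s := by rw [hA]
      rw [this, he3]
      simp [smul_eq_mul]; ring
    · intro f g _ hPf hPg
      obtain ⟨Cf, hCf⟩ := f.exists_forall_norm_le
      obtain ⟨Cg, hCg⟩ := g.exists_forall_norm_le
      have hfz : Integrable (fun ω => f (Z ω)) μ :=
        (integrable_const Cf).mono' (f.measurable.comp hZm).aestronglyMeasurable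
          (Eventually.of_forall fun ω => hCf (Z ω))
      have hgz : Integrable (fun ω => g (Z ω)) μ :=
        (integrable_const Cg).mono' (g.measurable.comp hZm).aestronglyMeasurable
          (Eventually.of_forall fun ω => hCg (Z ω))
      have hWfz : Integrable (fun ω => W ω * f (Z ω)) μ :=
        hfz.bdd_mul hWm.aestronglyMeasurable (Eventually.of_forall hWnorm)
      have hWgz : Integrable (fun ω => W ω * g (Z ω)) μ :=
        hgz.bdd_mul hWm.aestronglyMeasurable (Eventually.of_forall hWnorm)
      have hco : (fun ω => W ω * (f + g) (Z ω))
          = (fun ω => W ω * f (Z ω)) + fun ω => W ω * g (Z ω) := by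
        funext ω
        simp only [SimpleFunc.coe_add, Pi.add_apply]
        ring
      have hco2 : (fun ω => (f + g) (Z ω))
          = (fun ω => f (Z ω)) + fun ω => g (Z ω) := by
        funext ω; simp only [SimpleFunc.coe_add, Pi.add_apply]
      rw [hco, hco2]
      have e1 := condExp_add (m := m') hWfz hWgz
      have e2 := condExp_add (m := m') hfz hgz
      filter_upwards [e1, e2, hPf, hPg] with ω he1 he2 hf' hg'
      simp only [Pi.add_apply] at he1 he2 ⊢
      rw [he1, he2, hf', hg']; ring
  -- approximation
  set gn := fun n => SimpleFunc.approxOn (id : ℝ → ℝ) measurable_id (Set.univ : Set ℝ) 0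
    (Set.mem_univ 0) n with hgn
  have hgn_tend : ∀ x : ℝ, Tendsto (fun n => gn n x) atTop (𝓝 x) := fun x =>
    SimpleFunc.tendsto_approxOn measurable_id (Set.mem_univ 0) (by simp)
  have hgn_sub : ∀ n x, ‖gn n x - x‖ ≤ ‖x‖ := by
    intro n x
    have h := SimpleFunc.edist_approxOn_le measurable_id (Set.mem_univ 0) x n
    rw [edist_comm (0 : ℝ)] at h
    simpa [edist_dist, dist_eq_norm, ENNReal.ofReal_le_ofReal_iff, dist_nonneg] using h
  have hgn_norm : ∀ n x, ‖gn n x‖ ≤ 2 * ‖x‖ := by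
    intro n x
    have := SimpleFunc.norm_approxOn_zero_le measurable_id (Set.mem_univ 0) x n
    simpa [two_mul] using this
  have hgnint : ∀ n, Integrable (fun ω => gn n (Z ω)) μ :=
    fun n => (hZint.norm.const_mul 2).mono'
      ((gn n).measurable.comp hZm).aestronglyMeasurable
      (Eventually.of_forall fun ω => hgn_norm n (Z ω))
  have hWgnint : ∀ n, Integrable (fun ω => W ω * gn n (Z ω)) μ :=
    fun n => (hgnint n).bdd_mul hWm.aestronglyMeasurable (Eventually.of_forall hWnorm)
  -- set integral identity
  have hsetint : ∀ s : Set Ω, MeasurableSet[m'] s →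
      ∫ ω in s, (μ[W|m']) ω * (μ[Z|m']) ω ∂μ = ∫ ω in s, W ω * Z ω ∂μ := by
    intro s hs
    have h1 : Tendsto (fun n => ∫ ω in s, W ω * gn n (Z ω) ∂μ) atTop
        (𝓝 (∫ ω in s, W ω * Z ω ∂μ)) := by
      refine tendsto_integral_of_dominated_convergence (fun ω => 2 * ‖Z ω‖)
        (fun n => (hWm.mul ((gn n).measurable.comp hZm)).aestronglyMeasurable)
        ((hZint.norm.const_mul 2).restrict) (fun n => Eventually.of_forall fun ω => ?_)
        (Eventually.of_forall fun ω => ?_)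
      · calc ‖W ω * gn n (Z ω)‖ = ‖W ω‖ * ‖gn n (Z ω)‖ := norm_mul _ _
          _ ≤ 1 * (2 * ‖Z ω‖) :=
            mul_le_mul (hWnorm ω) (hgn_norm n (Z ω)) (norm_nonneg _) zero_le_one
          _ = 2 * ‖Z ω‖ := one_mul _
      · exact (hgn_tend (Z ω)).const_mul (W ω)
    have h2 : ∀ n, ∫ ω in s, W ω * gn n (Z ω) ∂μ
        = ∫ ω in s, (μ[W|m']) ω * (μ[fun ω => gn n (Z ω)|m']) ω ∂μ := by
      intro n
      rw [← setIntegral_condExp hm' (hWgnint n) hs]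
      exact integral_congr_ae (ae_restrict_of_ae (hsimp (gn n)))
    have h4 : Tendsto (fun n => ∫ ω, ‖gn n (Z ω) - Z ω‖ ∂μ) atTop (𝓝 0) := by
      have := tendsto_integral_of_dominated_convergence (μ := μ)
        (F := fun n ω => ‖gn n (Z ω) - Z ω‖) (f := fun _ => (0 : ℝ)) (fun ω => ‖Z ω‖)
        (fun n => (((gn n).measurable.comp hZm).sub hZm).norm.aestronglyMeasurable)
        hZint.norm (fun n => Eventually.of_forall fun ω => ?_)
        (Eventually.of_forall fun ω => ?_)
      · simpa using this
      · simpa using hgn_sub n (Z ω)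
      · have : Tendsto (fun n => gn n (Z ω) - Z ω) atTop (𝓝 0) := by
          simpa using (hgn_tend (Z ω)).sub (tendsto_const_nhds (x := Z ω))
        simpa using this.norm
    have h3 : Tendsto (fun n => ∫ ω in s, (μ[W|m']) ω * (μ[fun ω => gn n (Z ω)|m']) ω ∂μ)
        atTop (𝓝 (∫ ω in s, (μ[W|m']) ω * (μ[Z|m']) ω ∂μ)) := by
      rw [tendsto_iff_norm_sub_tendsto_zero]
      refine squeeze_zero (fun n => norm_nonneg _) (fun n => ?_) h4
      set q : Ω → ℝ := fun ω => (μ[fun ω => gn n (Z ω)|m']) ω - (μ[Z|m']) ω with hq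
      have hq_int : Integrable q μ := integrable_condExp.sub integrable_condExp
      have hEn_int : Integrable (fun ω => (μ[W|m']) ω * (μ[fun ω => gn n (Z ω)|m']) ω) μ :=
        integrable_condExp.bdd_mul
          (stronglyMeasurable_condExp.mono hm').aestronglyMeasurable hEWb
      have hEZ_int : Integrable (fun ω => (μ[W|m']) ω * (μ[Z|m']) ω) μ :=
        integrable_condExp.bdd_mul
          (stronglyMeasurable_condExp.mono hm').aestronglyMeasurable hEWb
      have hEWq_int : Integrable (fun ω => (μ[W|m']) ω * q ω) μ :=
        hq_int.bdd_mul (stronglyMeasurable_condExp.mono hm').aestronglyMeasurable hEWb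
      have hsub : ∫ ω in s, (μ[W|m']) ω * (μ[fun ω => gn n (Z ω)|m']) ω ∂μ
            - ∫ ω in s, (μ[W|m']) ω * (μ[Z|m']) ω ∂μ
          = ∫ ω in s, (μ[W|m']) ω * q ω ∂μ := by
        rw [← integral_sub hEn_int.restrict hEZ_int.restrict]
        refine integral_congr_ae (Eventually.of_forall fun ω => ?_)
        simp only [hq]; ring
      calc ‖∫ ω in s, (μ[W|m']) ω * (μ[fun ω => gn n (Z ω)|m']) ω ∂μ
            - ∫ ω in s, (μ[W|m']) ω * (μ[Z|m']) ω ∂μ‖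
          = ‖∫ ω in s, (μ[W|m']) ω * q ω ∂μ‖ := by rw [hsub]
        _ ≤ ∫ ω in s, ‖(μ[W|m']) ω * q ω‖ ∂μ := norm_integral_le_integral_norm _
        _ ≤ ∫ ω in s, ‖q ω‖ ∂μ := by
            refine integral_mono_ae hEWq_int.norm.restrict hq_int.norm.restrict
              (ae_restrict_of_ae ?_)
            filter_upwards [hEWb] with ω hb
            rw [norm_mul]
            exact mul_le_of_le_one_left (norm_nonneg _) hb
        _ ≤ ∫ ω, ‖q ω‖ ∂μ :=
            setIntegral_le_integral hq_int.norm (Eventually.of_forall fun ω => norm_nonneg _)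
        _ = ∫ ω, ‖(μ[(fun ω => gn n (Z ω)) - Z|m']) ω‖ ∂μ := by
            refine integral_congr_ae ?_
            filter_upwards [condExp_sub (μ := μ) (m := m') (hgnint n) hZint] with ω hh
            rw [hh]; simp [hq]
        _ ≤ ∫ ω, ‖gn n (Z ω) - Z ω‖ ∂μ := by
            simpa [Real.norm_eq_abs] using
              integral_abs_condExp_le (μ := μ) (m := m') ((fun ω => gn n (Z ω)) - Z)
    exact tendsto_nhds_unique h3 (by rwa [funext h2] at h1)
  refine (ae_eq_condExp_of_forall_setIntegral_eq hm' hWZint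
    (fun s _ _ => (integrable_condExp.bdd_mul
      (stronglyMeasurable_condExp.mono hm').aestronglyMeasurable hEWb).integrableOn)
    (fun s hs _ => hsetint s hs)
    (StronglyMeasurable.aestronglyMeasurable
      (stronglyMeasurable_condExp.mul stronglyMeasurable_condExp))).symm

lemma measurable_min_const' {Ω : Type*} {m : MeasurableSpace Ω} {f : Ω → ℝ}
    (hf : Measurable[m] f) (c : ℝ) : Measurable[m] fun ω => min (f ω) c :=
  hf.min measurable_const

lemma measurable_abs_mul_ratio' {Ω : Type*} {m : MeasurableSpace Ω} {M E : Ω → ℝ}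
    (hM : Measurable[m] M) (hE : Measurable[m] E) :
    Measurable[m] fun ω => |M ω| * ((1 - E ω) / E ω) :=
  hM.abs.mul ((measurable_const.sub hE).div hE)

lemma measurable_abs' {Ω : Type*} {m : MeasurableSpace Ω} {f : Ω → ℝ}
    (hf : Measurable[m] f) : Measurable[m] fun ω => |f ω| :=
  hf.abs

lemma measurable_comp_comap' {Ω : Type*} {m : MeasurableSpace Ω} {X : Ω → ℝ} {g : ℝ → ℝ}
    (hX : Measurable[m] X) (hg : Measurable g) : Measurable[m] fun ω => g (X ω) :=
  hg.comp hX

lemma measurable_one_div' {Ω : Type*} {m : MeasurableSpace Ω} {f : Ω → ℝ}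
    (hf : Measurable[m] f) : Measurable[m] fun ω => 1 / f ω :=
  measurable_const.div hf

section Wrapper

variable {Ω : Type*} [mΩ : MeasurableSpace Ω] [StandardBorelSpace Ω]
  (μ : Measure Ω) [IsProbabilityMeasure μ]

lemma doubly_robust_aux {m' : MeasurableSpace Ω} (hm' : m' ≤ mΩ)
    {W Y1 E Et M : Ω → ℝ}
    (hWm : Measurable[mΩ] W) (hY1m : Measurable[mΩ] Y1)
    (hEm : Measurable[m'] E) (hEtm : Measurable[m'] Et) (hMm : Measurable[m'] M)
    (hWbin : ∀ ω, W ω = 0 ∨ W ω = 1)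
    (hE01 : ∀ ω, 0 < E ω ∧ E ω < 1) (hEt01 : ∀ ω, 0 < Et ω ∧ Et ω < 1)
    (hprop : μ[W|m'] =ᵐ[μ] E)
    (hindep : CondIndepFun m' hm' W Y1 μ)
    (hY1int : Integrable Y1 μ)
    (hint : Integrable (fun ω => W ω * Y1 ω / Et ω - (W ω - Et ω) / Et ω * M ω) μ)
    (hdr : (Et =ᵐ[μ] E) ∨ (M =ᵐ[μ] μ[Y1|m'])) :
    ∫ ω, (W ω * Y1 ω / Et ω - (W ω - Et ω) / Et ω * M ω) ∂μ = ∫ ω, Y1 ω ∂μ := by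
  letI instΩ : MeasurableSpace Ω := mΩ
  have hW01 : ∀ ω, 0 ≤ W ω ∧ W ω ≤ 1 := fun ω => by rcases hWbin ω with h | h <;> simp [h]
  have hWnorm : ∀ ω, ‖W ω‖ ≤ 1 := fun ω => by
    rw [Real.norm_eq_abs, abs_le]; exact ⟨by linarith [(hW01 ω).1], (hW01 ω).2⟩
  have hWint : Integrable W μ :=
    (integrable_const (1 : ℝ)).mono' hWm.aestronglyMeasurable (Eventually.of_forall hWnorm)
  have hWY1int : Integrable (fun ω => W ω * Y1 ω) μ :=
    hY1int.bdd_mul hWm.aestronglyMeasurable (Eventually.of_forall hWnorm)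
  have hMmΩ : Measurable[mΩ] M := hMm.mono hm' le_rfl
  have hEmΩ : Measurable[mΩ] E := hEm.mono hm' le_rfl
  have hEtmΩ : Measurable[mΩ] Et := hEtm.mono hm' le_rfl
  have hfac := condExp_mul_of_condIndepFun hm' hWm hY1m hWbin hindep hY1int
  have hfacE : μ[fun ω => W ω * Y1 ω|m'] =ᵐ[μ] fun ω => E ω * (μ[Y1|m']) ω := by
    filter_upwards [hfac, hprop] with ω h1 h2
    rw [h1, h2]
  have pull : ∀ φ h : Ω → ℝ, StronglyMeasurable[m'] φ → Integrable h μ →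
      Integrable (fun ω => φ ω * h ω) μ →
      μ[fun ω => φ ω * h ω|m'] =ᵐ[μ] fun ω => φ ω * (μ[h|m']) ω := fun φ h hφ hh hφh =>
    condExp_mul_of_stronglyMeasurable_left hφ hφh hh
  have intpull : ∀ φ h : Ω → ℝ, StronglyMeasurable[m'] φ → Integrable h μ →
      Integrable (fun ω => φ ω * h ω) μ →
      ∫ ω, φ ω * h ω ∂μ = ∫ ω, φ ω * (μ[h|m']) ω ∂μ := by
    intro φ h hφ hh hφh
    rw [← integral_condExp hm' (μ := μ) (f := fun ω => φ ω * h ω)]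
    exact integral_congr_ae (pull φ h hφ hh hφh)
  rcases hdr with ha | hb
  · -- case (a): correct propensity model
    have mconst : ∀ c : ℝ, Measurable[m'] fun _ : Ω => c := fun c => measurable_const
    have intW : ∀ (φ : Ω → ℝ) (c : ℝ), Measurable[m'] φ → (∀ ω, |φ ω| ≤ c) →
        ∫ ω, φ ω * W ω ∂μ = ∫ ω, φ ω * E ω ∂μ := by
      intro φ c hφ hc
      have hφΩ : Measurable[mΩ] φ := hφ.mono hm' le_rfl
      have hφW : Integrable (fun ω => φ ω * W ω) μ :=
        hWint.bdd_mul hφΩ.aestronglyMeasurable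
          (Eventually.of_forall fun ω => by rw [Real.norm_eq_abs]; exact hc ω)
      rw [intpull φ W hφ.stronglyMeasurable hWint hφW]
      refine integral_congr_ae ?_
      filter_upwards [hprop] with ω h
      rw [h]
    have intW1 : ∀ (φ : Ω → ℝ) (c : ℝ), Measurable[m'] φ → (∀ ω, |φ ω| ≤ c) →
        ∫ ω, φ ω * (1 - W ω) ∂μ = ∫ ω, φ ω * (1 - E ω) ∂μ := by
      intro φ c hφ hc
      have hφΩ : Measurable[mΩ] φ := hφ.mono hm' le_rfl
      have hcn : ∀ ω, ‖φ ω‖ ≤ c := fun ω => by rw [Real.norm_eq_abs]; exact hc ω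
      have hφint : Integrable φ μ :=
        (integrable_const c).mono' hφΩ.aestronglyMeasurable (Eventually.of_forall hcn)
      have hφW : Integrable (fun ω => φ ω * W ω) μ :=
        hWint.bdd_mul hφΩ.aestronglyMeasurable (Eventually.of_forall hcn)
      have hφE : Integrable (fun ω => φ ω * E ω) μ := by
        refine hφint.norm.mono' (hφΩ.mul hEmΩ).aestronglyMeasurable
          (Eventually.of_forall fun ω => ?_)
        rw [Real.norm_eq_abs, Real.norm_eq_abs, abs_mul]
        refine mul_le_of_le_one_right (abs_nonneg _) ?_
        rw [abs_le]
        exact ⟨by linarith [(hE01 ω).1], le_of_lt (hE01 ω).2⟩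
      have e1 : ∫ ω, φ ω * (1 - W ω) ∂μ = ∫ ω, φ ω ∂μ - ∫ ω, φ ω * W ω ∂μ := by
        rw [← integral_sub hφint hφW]
        exact integral_congr_ae (Eventually.of_forall fun ω => by ring)
      have e2 : ∫ ω, φ ω * (1 - E ω) ∂μ = ∫ ω, φ ω ∂μ - ∫ ω, φ ω * E ω ∂μ := by
        rw [← integral_sub hφint hφE]
        exact integral_congr_ae (Eventually.of_forall fun ω => by ring)
      rw [e1, e2, intW φ c hφ hc]
    -- |M|·(1-W) is integrable, dominated by the full integrand
    have hp1int : Integrable (fun ω => |M ω| * (1 - W ω)) μ := by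
      refine hint.norm.mono' (hMmΩ.abs.mul (measurable_const.sub hWm)).aestronglyMeasurable
        (Eventually.of_forall fun ω => ?_)
      rcases hWbin ω with h | h
      · have hne := (hEt01 ω).1.ne'
        have hf0 : W ω * Y1 ω / Et ω - (W ω - Et ω) / Et ω * M ω = M ω := by
          rw [h]; field_simp; ring
        rw [hf0, h]
        simp [Real.norm_eq_abs, abs_abs]
      · rw [h]
        simp [norm_nonneg]
    -- |M|·(1-E) is integrable
    have hMEint : Integrable (fun ω => |M ω| * (1 - E ω)) μ := by
      refine integrable_of_monotone_approx (μ := μ)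
        (hMmΩ.abs.mul (measurable_const.sub hEmΩ))
        (fun ω => mul_nonneg (abs_nonneg _) (by linarith [(hE01 ω).2]))
        (g := fun k ω => min (|M ω|) k * (1 - E ω))
        (fun k => (hMmΩ.abs.min measurable_const).mul (measurable_const.sub hEmΩ))
        (fun k ω => mul_nonneg (le_min (abs_nonneg _) (Nat.cast_nonneg _))
          (by linarith [(hE01 ω).2]))
        (fun k => (integrable_const (k : ℝ)).mono'
          (((hMmΩ.abs.min measurable_const).mul
            (measurable_const.sub hEmΩ)).aestronglyMeasurable)
          (Eventually.of_forall fun ω => ?_))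
        (fun ω i j hij => mul_le_mul_of_nonneg_right
          (min_le_min le_rfl (Nat.cast_le.mpr hij)) (by linarith [(hE01 ω).2]))
        (fun ω => ?_) (C := ∫ ω, |M ω| * (1 - W ω) ∂μ) ?_
      · rw [Real.norm_eq_abs, abs_of_nonneg (mul_nonneg
          (le_min (abs_nonneg _) (Nat.cast_nonneg _)) (by linarith [(hE01 ω).2]))]
        calc min (|M ω|) (k : ℝ) * (1 - E ω) ≤ (k : ℝ) * 1 :=
              mul_le_mul (min_le_right _ _) (by linarith [(hE01 ω).1])
                (by linarith [(hE01 ω).2]) (Nat.cast_nonneg _)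
          _ = (k : ℝ) := mul_one _
      · obtain ⟨k₀, hk₀⟩ := exists_nat_ge (|M ω|)
        refine Tendsto.congr' ?_ (tendsto_const_nhds (x := |M ω| * (1 - E ω)))
        refine eventually_atTop.mpr ⟨k₀, fun i hi => ?_⟩
        have hmin := min_eq_left (hk₀.trans (Nat.cast_le.mpr hi))
        simp only [hmin]
      · intro k
        have hφm' : Measurable[m'] fun ω => min (|M ω|) (k : ℝ) :=
          measurable_min_const' (measurable_abs' hMm) _
        have hbd : ∀ ω, |min (|M ω|) (k : ℝ)| ≤ (k : ℝ) := fun ω => by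
          rw [abs_of_nonneg (le_min (abs_nonneg _) (Nat.cast_nonneg _))]
          exact min_le_right _ _
        rw [← intW1 _ _ hφm' hbd]
        refine integral_mono_ae ?_ hp1int (Eventually.of_forall fun ω => ?_)
        · refine (integrable_const (k : ℝ)).mono'
            (((hMmΩ.abs.min measurable_const).mul
              (measurable_const.sub hWm)).aestronglyMeasurable)
            (Eventually.of_forall fun ω => ?_)
          rw [Real.norm_eq_abs, abs_of_nonneg (mul_nonneg
            (le_min (abs_nonneg _) (Nat.cast_nonneg _)) (by linarith [(hW01 ω).2]))]
          calc min (|M ω|) (k : ℝ) * (1 - W ω) ≤ (k : ℝ) * 1 :=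
                mul_le_mul (min_le_right _ _) (by linarith [(hW01 ω).1])
                  (by linarith [(hW01 ω).2]) (Nat.cast_nonneg _)
            _ = (k : ℝ) := mul_one _
        · exact mul_le_mul_of_nonneg_right (min_le_left _ _) (by linarith [(hW01 ω).2])
    -- |M|·((1-E)/E)·W is integrable
    have hrE0 : ∀ ω, 0 ≤ (1 - E ω) / E ω := fun ω =>
      div_nonneg (by linarith [(hE01 ω).2]) (le_of_lt (hE01 ω).1)
    have hrm' : Measurable[m'] fun ω => |M ω| * ((1 - E ω) / E ω) :=
      measurable_abs_mul_ratio' hMm hEm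
    have hrmΩ : Measurable[mΩ] fun ω => |M ω| * ((1 - E ω) / E ω) := hrm'.mono hm' le_rfl
    have hp2int : Integrable (fun ω => |M ω| * ((1 - E ω) / E ω) * W ω) μ := by
      refine integrable_of_monotone_approx (μ := μ)
        (hrmΩ.mul hWm)
        (fun ω => mul_nonneg (mul_nonneg (abs_nonneg _) (hrE0 ω)) (hW01 ω).1)
        (g := fun k ω => min (|M ω| * ((1 - E ω) / E ω)) k * W ω)
        (fun k => (hrmΩ.min measurable_const).mul hWm)
        (fun k ω => mul_nonneg (le_min (mul_nonneg (abs_nonneg _) (hrE0 ω))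
          (Nat.cast_nonneg _)) (hW01 ω).1)
        (fun k => (integrable_const (k : ℝ)).mono'
          (((hrmΩ.min measurable_const).mul hWm).aestronglyMeasurable)
          (Eventually.of_forall fun ω => ?_))
        (fun ω i j hij => mul_le_mul_of_nonneg_right
          (min_le_min le_rfl (Nat.cast_le.mpr hij)) (hW01 ω).1)
        (fun ω => ?_) (C := ∫ ω, |M ω| * (1 - E ω) ∂μ) ?_
      · rw [Real.norm_eq_abs, abs_of_nonneg (mul_nonneg (le_min
          (mul_nonneg (abs_nonneg _) (hrE0 ω)) (Nat.cast_nonneg _)) (hW01 ω).1)]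
        calc min (|M ω| * ((1 - E ω) / E ω)) (k : ℝ) * W ω ≤ (k : ℝ) * 1 :=
              mul_le_mul (min_le_right _ _) (hW01 ω).2 (hW01 ω).1 (Nat.cast_nonneg _)
          _ = (k : ℝ) := mul_one _
      · obtain ⟨k₀, hk₀⟩ := exists_nat_ge (|M ω| * ((1 - E ω) / E ω))
        refine Tendsto.congr' ?_
          (tendsto_const_nhds (x := |M ω| * ((1 - E ω) / E ω) * W ω))
        refine eventually_atTop.mpr ⟨k₀, fun i hi => ?_⟩
        have hmin := min_eq_left (hk₀.trans (Nat.cast_le.mpr hi))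
        simp only [hmin]
      · intro k
        have hφm' : Measurable[m'] fun ω => min (|M ω| * ((1 - E ω) / E ω)) (k : ℝ) :=
          measurable_min_const' hrm' _
        have hbd : ∀ ω, |min (|M ω| * ((1 - E ω) / E ω)) (k : ℝ)| ≤ (k : ℝ) := fun ω => by
          rw [abs_of_nonneg (le_min (mul_nonneg (abs_nonneg _) (hrE0 ω)) (Nat.cast_nonneg _))]
          exact min_le_right _ _
        rw [intW _ _ hφm' hbd]
        refine integral_mono_ae ?_ hMEint (Eventually.of_forall fun ω => ?_)
        · refine (integrable_const (k : ℝ)).mono'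
            (((hrmΩ.min measurable_const).mul hEmΩ).aestronglyMeasurable)
            (Eventually.of_forall fun ω => ?_)
          rw [Real.norm_eq_abs, abs_of_nonneg (mul_nonneg (le_min
            (mul_nonneg (abs_nonneg _) (hrE0 ω)) (Nat.cast_nonneg _)) (le_of_lt (hE01 ω).1))]
          calc min (|M ω| * ((1 - E ω) / E ω)) (k : ℝ) * E ω ≤ (k : ℝ) * 1 :=
                mul_le_mul (min_le_right _ _) (le_of_lt (hE01 ω).2) (le_of_lt (hE01 ω).1)
                  (Nat.cast_nonneg _)
            _ = (k : ℝ) := mul_one _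
        · have h1 : min (|M ω| * ((1 - E ω) / E ω)) (k : ℝ) * E ω
              ≤ |M ω| * ((1 - E ω) / E ω) * E ω :=
            mul_le_mul_of_nonneg_right (min_le_left _ _) (le_of_lt (hE01 ω).1)
          have h2 : |M ω| * ((1 - E ω) / E ω) * E ω = |M ω| * (1 - E ω) := by
            have hne := (hE01 ω).1.ne'
            field_simp
          rw [h2] at h1
          exact h1
    -- (1/E)·W is integrable
    have hWEint : Integrable (fun ω => 1 / E ω * W ω) μ := by
      refine integrable_of_monotone_approx (μ := μ)
        ((measurable_const.div hEmΩ).mul hWm)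
        (fun ω => mul_nonneg (le_of_lt (one_div_pos.mpr (hE01 ω).1)) (hW01 ω).1)
        (g := fun k ω => min (1 / E ω) k * W ω)
        (fun k => ((measurable_const.div hEmΩ).min measurable_const).mul hWm)
        (fun k ω => mul_nonneg (le_min (le_of_lt (one_div_pos.mpr (hE01 ω).1))
          (Nat.cast_nonneg _)) (hW01 ω).1)
        (fun k => (integrable_const (k : ℝ)).mono'
          ((((measurable_const.div hEmΩ).min measurable_const).mul hWm).aestronglyMeasurable)
          (Eventually.of_forall fun ω => ?_))
        (fun ω i j hij => mul_le_mul_of_nonneg_right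
          (min_le_min le_rfl (Nat.cast_le.mpr hij)) (hW01 ω).1)
        (fun ω => ?_) (C := 1) ?_
      · rw [Real.norm_eq_abs, abs_of_nonneg (mul_nonneg (le_min
          (le_of_lt (one_div_pos.mpr (hE01 ω).1)) (Nat.cast_nonneg _)) (hW01 ω).1)]
        calc min (1 / E ω) (k : ℝ) * W ω ≤ (k : ℝ) * 1 :=
              mul_le_mul (min_le_right _ _) (hW01 ω).2 (hW01 ω).1 (Nat.cast_nonneg _)
          _ = (k : ℝ) := mul_one _
      · obtain ⟨k₀, hk₀⟩ := exists_nat_ge (1 / E ω)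
        refine Tendsto.congr' ?_ (tendsto_const_nhds (x := 1 / E ω * W ω))
        refine eventually_atTop.mpr ⟨k₀, fun i hi => ?_⟩
        have hmin := min_eq_left (hk₀.trans (Nat.cast_le.mpr hi))
        simp only [hmin]
      · intro k
        have hφm' : Measurable[m'] fun ω => min (1 / E ω) (k : ℝ) :=
          measurable_min_const' (measurable_one_div' hEm) _
        have hbd : ∀ ω, |min (1 / E ω) (k : ℝ)| ≤ (k : ℝ) := fun ω => by
          rw [abs_of_nonneg (le_min (le_of_lt (one_div_pos.mpr (hE01 ω).1))
            (Nat.cast_nonneg _))]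
          exact min_le_right _ _
        rw [intW _ _ hφm' hbd]
        have hle : ∀ ω, min (1 / E ω) (k : ℝ) * E ω ≤ 1 := fun ω => by
          have h1 : min (1 / E ω) (k : ℝ) * E ω ≤ 1 / E ω * E ω :=
            mul_le_mul_of_nonneg_right (min_le_left _ _) (le_of_lt (hE01 ω).1)
          have h2 : 1 / E ω * E ω = 1 := by
            have hne := (hE01 ω).1.ne'
            field_simp
          linarith
        calc ∫ ω, min (1 / E ω) (k : ℝ) * E ω ∂μ ≤ ∫ _, (1 : ℝ) ∂μ := by
              refine integral_mono_ae ?_ (integrable_const 1) (Eventually.of_forall hle)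
              refine (integrable_const (k : ℝ)).mono'
                ((((measurable_const.div hEmΩ).min measurable_const).mul
                  hEmΩ).aestronglyMeasurable)
                (Eventually.of_forall fun ω => ?_)
              rw [Real.norm_eq_abs, abs_of_nonneg (mul_nonneg (le_min
                (le_of_lt (one_div_pos.mpr (hE01 ω).1)) (Nat.cast_nonneg _))
                (le_of_lt (hE01 ω).1))]
              calc min (1 / E ω) (k : ℝ) * E ω ≤ (k : ℝ) * 1 :=
                    mul_le_mul (min_le_right _ _) (le_of_lt (hE01 ω).2)
                      (le_of_lt (hE01 ω).1) (Nat.cast_nonneg _)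
                _ = (k : ℝ) := mul_one _
          _ = 1 := by simp
    -- now assemble case (a)
    have hg2int : Integrable (fun ω => M ω * ((Et ω - W ω) / Et ω)) μ := by
      refine (hp1int.add hp2int).mono'
        ((hMmΩ.mul ((hEtmΩ.sub hWm).div hEtmΩ)).aestronglyMeasurable) ?_
      filter_upwards [ha] with ω hω
      have hE := hE01 ω
      rcases hWbin ω with h | h
      · rw [h, hω]
        have hs : (E ω - 0) / E ω = 1 := by
          rw [sub_zero, div_self hE.1.ne']
        rw [hs, mul_one, Real.norm_eq_abs]
        have : 0 ≤ |M ω| * ((1 - E ω) / E ω) * 0 := by rw [mul_zero]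
        simp only [Pi.add_apply]
        rw [h]
        nlinarith [abs_nonneg (M ω)]
      · rw [h, hω]
        simp only [Pi.add_apply]
        rw [h]
        have h1 : ‖M ω * ((E ω - 1) / E ω)‖ = |M ω| * ((1 - E ω) / E ω) := by
          rw [Real.norm_eq_abs, abs_mul, abs_div, abs_of_pos hE.1, abs_sub_comm,
            abs_of_pos (by linarith [hE.2] : (0 : ℝ) < 1 - E ω)]
        rw [h1]
        nlinarith [abs_nonneg (M ω)]
    have hEtWint : Integrable (fun ω => 1 / Et ω * W ω) μ := by
      refine hWEint.congr ?_
      filter_upwards [ha] with ω h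
      rw [h]
    have hh2int : Integrable (fun ω => (Et ω - W ω) / Et ω) μ := by
      refine ((integrable_const (1 : ℝ)).sub hEtWint).congr
        (Eventually.of_forall fun ω => ?_)
      simp only [Pi.sub_apply]
      have hne := (hEt01 ω).1.ne'
      field_simp
    have hsplit : ∀ ω, W ω * Y1 ω / Et ω - (W ω - Et ω) / Et ω * M ω
        = 1 / Et ω * (W ω * Y1 ω) + M ω * ((Et ω - W ω) / Et ω) := by
      intro ω
      have hne := (hEt01 ω).1.ne'
      field_simp
      ring
    have hg1int : Integrable (fun ω => 1 / Et ω * (W ω * Y1 ω)) μ := by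
      refine (hint.sub hg2int).congr (Eventually.of_forall fun ω => ?_)
      simp only [Pi.sub_apply]
      rw [hsplit ω]
      ring
    have hφEt : Measurable[m'] fun ω => 1 / Et ω := measurable_one_div' hEtm
    have hCh2 : μ[fun ω => (Et ω - W ω) / Et ω|m'] =ᵐ[μ] fun _ => (0 : ℝ) := by
      have h1 : μ[fun ω => (Et ω - W ω) / Et ω|m']
          =ᵐ[μ] μ[(fun _ => (1 : ℝ)) - fun ω => 1 / Et ω * W ω|m'] := by
        refine condExp_congr_ae (Eventually.of_forall fun ω => ?_)
        simp only [Pi.sub_apply]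
        have hne := (hEt01 ω).1.ne'
        field_simp
      refine h1.trans ((condExp_sub (integrable_const 1) hEtWint _).trans ?_)
      have h2 := pull (fun ω => 1 / Et ω) W hφEt.stronglyMeasurable hWint hEtWint
      have h3 : μ[fun _ : Ω => (1 : ℝ)|m'] = fun _ => (1 : ℝ) := condExp_const hm' 1
      filter_upwards [h2, hprop, ha] with ω e2 e3 e4
      simp only [Pi.sub_apply]
      rw [h3, e2, e3, e4]
      have hne := (hE01 ω).1.ne'
      field_simp
      ring
    have hCg2 : μ[fun ω => M ω * ((Et ω - W ω) / Et ω)|m'] =ᵐ[μ] fun _ => (0 : ℝ) := by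
      refine (pull M (fun ω => (Et ω - W ω) / Et ω)
        hMm.stronglyMeasurable hh2int hg2int).trans ?_
      filter_upwards [hCh2] with ω h
      rw [h]
      exact mul_zero _
    have hCg1 : μ[fun ω => 1 / Et ω * (W ω * Y1 ω)|m'] =ᵐ[μ] μ[Y1|m'] := by
      refine (pull (fun ω => 1 / Et ω) (fun ω => W ω * Y1 ω)
        hφEt.stronglyMeasurable hWY1int hg1int).trans ?_
      filter_upwards [hfacE, ha] with ω e1 e2
      rw [e1, e2]
      have hne := (hE01 ω).1.ne'
      field_simp
    have hint2 : ∫ ω, M ω * ((Et ω - W ω) / Et ω) ∂μ = 0 := by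
      rw [← integral_condExp hm' (μ := μ) (f := fun ω => M ω * ((Et ω - W ω) / Et ω)),
        integral_congr_ae hCg2]
      simp
    have hint1 : ∫ ω, 1 / Et ω * (W ω * Y1 ω) ∂μ = ∫ ω, Y1 ω ∂μ := by
      rw [← integral_condExp hm' (μ := μ) (f := fun ω => 1 / Et ω * (W ω * Y1 ω)),
        integral_congr_ae hCg1]
      exact integral_condExp hm'
    calc ∫ ω, (W ω * Y1 ω / Et ω - (W ω - Et ω) / Et ω * M ω) ∂μ
        = ∫ ω, (1 / Et ω * (W ω * Y1 ω) + M ω * ((Et ω - W ω) / Et ω)) ∂μ :=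
          integral_congr_ae (Eventually.of_forall fun ω => hsplit ω)
      _ = ∫ ω, 1 / Et ω * (W ω * Y1 ω) ∂μ + ∫ ω, M ω * ((Et ω - W ω) / Et ω) ∂μ :=
          integral_add hg1int hg2int
      _ = ∫ ω, Y1 ω ∂μ := by rw [hint1, hint2, add_zero]
  · -- case (b): correct outcome model
    have hMint : Integrable M μ := integrable_condExp.congr hb.symm
    have hptw : ∀ ω, W ω * Y1 ω / Et ω - (W ω - Et ω) / Et ω * M ω
        = 1 / Et ω * (W ω * (Y1 ω - M ω)) + M ω := by
      intro ω
      have hne := (hEt01 ω).1.ne'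
      field_simp
      ring
    have hgint : Integrable (fun ω => 1 / Et ω * (W ω * (Y1 ω - M ω))) μ := by
      refine (hint.sub hMint).congr (Eventually.of_forall fun ω => ?_)
      simp only [Pi.sub_apply]
      rw [hptw ω]; ring
    have hWYMint : Integrable (fun ω => W ω * (Y1 ω - M ω)) μ := by
      refine hgint.norm.mono' (hWm.mul (hY1m.sub hMmΩ)).aestronglyMeasurable
        (Eventually.of_forall fun ω => ?_)
      have h1 : W ω * (Y1 ω - M ω) = Et ω * (1 / Et ω * (W ω * (Y1 ω - M ω))) := by
        have hne := (hEt01 ω).1.ne'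
        field_simp
      have hEt1 : |Et ω| ≤ 1 := by
        rw [abs_le]; exact ⟨by linarith [(hEt01 ω).1], le_of_lt (hEt01 ω).2⟩
      calc ‖W ω * (Y1 ω - M ω)‖ = ‖Et ω * (1 / Et ω * (W ω * (Y1 ω - M ω)))‖ := by rw [← h1]
        _ ≤ ‖1 / Et ω * (W ω * (Y1 ω - M ω))‖ := by
            rw [norm_mul]
            exact mul_le_of_le_one_left (norm_nonneg _) (by rw [Real.norm_eq_abs]; exact hEt1)
    have hWMint : Integrable (fun ω => W ω * M ω) μ :=
      (hWY1int.sub hWYMint).congr (Eventually.of_forall fun ω => by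
        simp only [Pi.sub_apply]; ring)
    have hMWint : Integrable (fun ω => M ω * W ω) μ :=
      hWMint.congr (Eventually.of_forall fun ω => by ring)
    have hCM : μ[fun ω => W ω * M ω|m'] =ᵐ[μ] fun ω => M ω * (μ[W|m']) ω := by
      refine (condExp_congr_ae (Eventually.of_forall fun ω => ?_)).trans
        (pull M W hMm.stronglyMeasurable hWint hMWint)
      exact mul_comm (W ω) (M ω)
    have hCWYM : μ[fun ω => W ω * (Y1 ω - M ω)|m'] =ᵐ[μ] fun _ => (0 : ℝ) := by
      have h1 : μ[fun ω => W ω * (Y1 ω - M ω)|m']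
          =ᵐ[μ] μ[(fun ω => W ω * Y1 ω) - fun ω => W ω * M ω|m'] :=
        condExp_congr_ae (Eventually.of_forall fun ω => by
          simp only [Pi.sub_apply]; ring)
      refine h1.trans ((condExp_sub hWY1int hWMint _).trans ?_)
      filter_upwards [hfacE, hCM, hprop, hb] with ω e1 e2 e3 e4
      simp only [Pi.sub_apply]
      rw [e1, e2, e3, e4]
      ring
    have hφEt : Measurable[m'] fun ω => 1 / Et ω := measurable_const.div hEtm
    have hCg : μ[fun ω => 1 / Et ω * (W ω * (Y1 ω - M ω))|m'] =ᵐ[μ] fun _ => (0 : ℝ) := by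
      refine (pull _ _ hφEt.stronglyMeasurable hWYMint hgint).trans ?_
      filter_upwards [hCWYM] with ω h
      rw [h]
      exact mul_zero _
    have hg0 : ∫ ω, 1 / Et ω * (W ω * (Y1 ω - M ω)) ∂μ = 0 := by
      rw [← integral_condExp hm' (μ := μ) (f := fun ω => 1 / Et ω * (W ω * (Y1 ω - M ω))),
        integral_congr_ae hCg]
      simp
    calc ∫ ω, (W ω * Y1 ω / Et ω - (W ω - Et ω) / Et ω * M ω) ∂μ
        = ∫ ω, (1 / Et ω * (W ω * (Y1 ω - M ω)) + M ω) ∂μ :=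
          integral_congr_ae (Eventually.of_forall fun ω => hptw ω)
      _ = ∫ ω, 1 / Et ω * (W ω * (Y1 ω - M ω)) ∂μ + ∫ ω, M ω ∂μ := integral_add hgint hMint
      _ = ∫ ω, M ω ∂μ := by rw [hg0, zero_add]
      _ = ∫ ω, (μ[Y1|m']) ω ∂μ := integral_congr_ae hb
      _ = ∫ ω, Y1 ω ∂μ := integral_condExp hm'

end Wrapper


/-- Double robustness: if either the working propensity model `ẽ` equals the true
propensity `e` a.s., or the working outcome model `m̃₁` equals `E[Y¹|X]` a.s., then
`E[W·Y/ẽ(X) − ((W−ẽ(X))/ẽ(X))·m̃₁(X)] = E[Y¹]` under unconfoundedness and overlap. -/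
theorem doubly_robust_identification
    {Ω : Type*} [MeasurableSpace Ω] [StandardBorelSpace Ω]
    (μ : Measure Ω) [IsProbabilityMeasure μ]
    (X : Ω → ℝ) (W : Ω → ℝ) (Y1 Y0 Y : Ω → ℝ)
    (hX : Measurable X) (hW : Measurable W) (hY1 : Measurable Y1) (hY0 : Measurable Y0)
    (hWbin : ∀ ω, W ω = 0 ∨ W ω = 1)
    (hY : ∀ ω, Y ω = W ω * Y1 ω + (1 - W ω) * Y0 ω)
    (e : ℝ → ℝ) (he : Measurable e)
    (hoverlap : ∀ x, 0 < e x ∧ e x < 1)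
    (hprop : μ[W | MeasurableSpace.comap X inferInstance] =ᵐ[μ] fun ω => e (X ω))
    (hunconf : CondIndepFun (MeasurableSpace.comap X inferInstance) (hX.comap_le) W
      (fun ω => (Y1 ω, Y0 ω)) μ)
    (etil m1 : ℝ → ℝ) (hetil : Measurable etil) (hm1 : Measurable m1)
    (hetil01 : ∀ x, 0 < etil x ∧ etil x < 1)
    (hY1int : Integrable Y1 μ)
    (hint : Integrable
      (fun ω => W ω * Y ω / etil (X ω) - (W ω - etil (X ω)) / etil (X ω) * m1 (X ω)) μ)
    (hdr : ((fun ω => etil (X ω)) =ᵐ[μ] fun ω => e (X ω)) ∨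
      ((fun ω => m1 (X ω)) =ᵐ[μ] μ[Y1 | MeasurableSpace.comap X inferInstance])) :
    ∫ ω, (W ω * Y ω / etil (X ω) - (W ω - etil (X ω)) / etil (X ω) * m1 (X ω)) ∂μ
      = ∫ ω, Y1 ω ∂μ := by
  have hXm' : Measurable[MeasurableSpace.comap X inferInstance] X := fun s hs => ⟨s, hs, rfl⟩
  have hWY : ∀ ω, W ω * Y ω = W ω * Y1 ω := fun ω => by
    rcases hWbin ω with h | h <;> rw [hY ω, h] <;> ring
  have hre : (fun ω => W ω * Y ω / etil (X ω) - (W ω - etil (X ω)) / etil (X ω) * m1 (X ω))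
      = fun ω => W ω * Y1 ω / etil (X ω) - (W ω - etil (X ω)) / etil (X ω) * m1 (X ω) :=
    funext fun ω => by rw [hWY ω]
  rw [hre] at hint ⊢
  have hindep : CondIndepFun (MeasurableSpace.comap X inferInstance) hX.comap_le W Y1 μ :=
    hunconf.comp measurable_id measurable_fst
  exact doubly_robust_aux μ hX.comap_le hW hY1 (measurable_comp_comap' hXm' he)
    (measurable_comp_comap' hXm' hetil) (measurable_comp_comap' hXm' hm1) hWbin
    (fun ω => hoverlap (X ω)) (fun ω => hetil01 (X ω)) hprop hindep hY1int hint hdr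
end
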